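/- Let A_1, …, A_k be pairwise commuting N×N matrices with nonnegative integer entries forming an irreducible family, with every row sum of every A_i at least 2, let ρ_i be the spectral radius of A_i, let x ∈ (0,∞)^N be the unimodular Perron–Frobenius eigenvector, and fix δ ∈ (0,1). Then for every real s, the series ζ_δ(s) = Σ_{λ ∈ FB} w_δ(λ)^s converges if and only if s > δ. -/

import Mathlib

open scoped Classical ENNReal Topology
open TopologicalSpace MeasureTheory Filter Set
open scoped Fin.NatCast

namespace KBratteli

variable (k N : ℕ) [NeZero k] (A : Fin k → Matrix (Fin N) (Fin N) ℕ)

/-- An edge at level `n` of the stationary `k`-Bratteli diagram of the matrices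
`A 0, …, A (k-1)`: an element of `Edge k N A n` is an edge whose source lies in the
level-`(n+1)` vertex set and whose range lies in the level-`n` vertex set (both copies of
`Fin N`); there are exactly `A (n % k) p q` edges with range `p` and source `q`. -/
structure Edge (n : ℕ) : Type where
  rg : Fin N
  src : Fin N
  idx : Fin (A (n : Fin k) rg src)

/-- The infinite path space `X_B` of the stationary `k`-Bratteli diagram of `A`. -/
def PathSpace : Type :=
  { x : (n : ℕ) → Edge k N A n // ∀ n, (x n).src = (x (n + 1)).rg }

/-- A finite path of length `ℓ` beginning at level `0`: a composable string of edges,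
together with the vertices it visits.  Length-`0` paths are vertices of `V₀`. -/
structure FinPath (ℓ : ℕ) : Type where
  vtx : Fin (ℓ + 1) → Fin N
  edge : (i : Fin ℓ) → Edge k N A i
  rg_eq : ∀ i : Fin ℓ, (edge i).rg = vtx i.castSucc
  src_eq : ∀ i : Fin ℓ, (edge i).src = vtx i.succ

/-- `FB`: the set of all finite paths (of all lengths) beginning at level `0`. -/
abbrev FB : Type := Σ ℓ : ℕ, FinPath k N A ℓ

variable {k N A}

/-- The source (final) vertex of a finite path. -/
def FinPath.src {ℓ : ℕ} (lam : FinPath k N A ℓ) : Fin N := lam.vtx (Fin.last ℓ)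

/-- The range (initial, level-0) vertex of a finite path. -/
def FinPath.rg {ℓ : ℕ} (lam : FinPath k N A ℓ) : Fin N := lam.vtx 0

/-- The length-0 finite path at the level-0 vertex `v`. -/
def vertexPath (v : Fin N) : FinPath k N A 0 where
  vtx := fun _ => v
  edge := fun i => i.elim0
  rg_eq := fun i => i.elim0
  src_eq := fun i => i.elim0

/-- The cylinder set `[λ]` of a finite path `λ`: all infinite paths with initial
segment `λ`. -/
def Cyl {ℓ : ℕ} (lam : FinPath k N A ℓ) : Set (PathSpace k N A) :=
  { x | (x.1 0).rg = lam.rg ∧ ∀ i : Fin ℓ, x.1 i = lam.edge i }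

variable (k N A) in
/-- The collection of all cylinder sets. -/
def cylinderSets : Set (Set (PathSpace k N A)) :=
  { S | ∃ (ℓ : ℕ) (lam : FinPath k N A ℓ), S = Cyl lam }

/-- The cylinder-set topology on the infinite path space. -/
instance : TopologicalSpace (PathSpace k N A) :=
  generateFrom (cylinderSets k N A)

/-- The Borel σ-algebra of the cylinder-set topology. -/
instance : MeasurableSpace (PathSpace k N A) := borel _

instance : BorelSpace (PathSpace k N A) := ⟨rfl⟩

lemma isOpen_cyl {ℓ : ℕ} (lam : FinPath k N A ℓ) : IsOpen (Cyl lam) :=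
  isOpen_generateFrom_of_mem ⟨ℓ, lam, rfl⟩

lemma measurableSet_cyl {ℓ : ℕ} (lam : FinPath k N A ℓ) : MeasurableSet (Cyl lam) :=
  (isOpen_cyl lam).measurableSet

/-- Edges form a finite type. -/
def edgeEquiv (n : ℕ) : Edge k N A n ≃ Σ p : Fin N, Σ q : Fin N, Fin (A (n : Fin k) p q) where
  toFun e := ⟨e.rg, e.src, e.idx⟩
  invFun t := ⟨t.1, t.2.1, t.2.2⟩
  left_inv e := rfl
  right_inv t := rfl

instance (n : ℕ) : Finite (Edge k N A n) := by
  have : ∀ p : Fin N, Finite (Σ q : Fin N, Fin (A (n : Fin k) p q)) := fun p => Finite.instSigma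
  exact Finite.of_equiv _ (edgeEquiv n).symm

instance (ℓ : ℕ) : Finite (FinPath k N A ℓ) := by
  have hinj : Function.Injective
      (fun lam : FinPath k N A ℓ => (lam.vtx, lam.edge)) := by
    rintro ⟨v, e, h1, h2⟩ ⟨v', e', h1', h2'⟩ h
    simp only [Prod.mk.injEq] at h
    obtain ⟨hv, he⟩ := h
    subst hv; subst he; rfl
  exact Finite.of_injective _ hinj

instance : Countable (FB k N A) := by infer_instance

/-- The initial segment of length `m` of an infinite path. -/
def prefixPath (x : PathSpace k N A) (m : ℕ) : FinPath k N A m where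
  vtx := fun i => (x.1 i).rg
  edge := fun i => x.1 i
  rg_eq := fun _ => rfl
  src_eq := fun i => x.2 i

lemma mem_cyl_prefixPath (x : PathSpace k N A) (m : ℕ) : x ∈ Cyl (prefixPath x m) :=
  ⟨rfl, fun _ => rfl⟩

lemma measurableSet_coord (j : ℕ) (P : Edge k N A j → Prop) :
    MeasurableSet { x : PathSpace k N A | P (x.1 j) } := by
  have h : { x : PathSpace k N A | P (x.1 j) }
      = ⋃ (lam : FinPath k N A (j + 1)) (_ : P (lam.edge (Fin.last j))), Cyl lam := by
    ext x
    simp only [Set.mem_setOf_eq, Set.mem_iUnion]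
    constructor
    · intro hx
      exact ⟨prefixPath x (j + 1), hx, mem_cyl_prefixPath x (j + 1)⟩
    · rintro ⟨lam, hP, -, hedge⟩
      have hx : x.1 j = lam.edge (Fin.last j) := hedge (Fin.last j)
      rw [hx]; exact hP
  rw [h]
  exact MeasurableSet.iUnion fun lam => MeasurableSet.iUnion fun _ => measurableSet_cyl lam

/-- The first level at which two infinite paths differ. -/
noncomputable def firstDiff (x y : PathSpace k N A) : ℕ := sInf { n | x.1 n ≠ y.1 n }

/-- The function `d_w` associated to a weight-type function `w` on finite paths:
`d_w(x,x) = 0`; `d_w(x,y) = 1` if `x` and `y` have no common initial sub-path (i.e. they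
do not even start at the same level-0 vertex); and otherwise `d_w(x,y) = w(x ∧ y)`, the
value of `w` on the longest common initial sub-path of `x` and `y`. -/
noncomputable def distW (w : FB k N A → ℝ) (x y : PathSpace k N A) : ℝ :=
  if x = y then 0
  else if (x.1 0).rg = (y.1 0).rg then w ⟨firstDiff x y, prefixPath x (firstDiff x y)⟩
  else 1

/-- `η` is an (initial) sub-path of `λ`. -/
def IsSubPath {m ℓ : ℕ} (η : FinPath k N A m) (lam : FinPath k N A ℓ) : Prop :=
  ∃ h : m ≤ ℓ, η.rg = lam.rg ∧ ∀ i : Fin m, η.edge i = lam.edge (Fin.castLE h i)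

/-- `lam ∈ F_γ B` : the finite path `lam` extends `γ`. -/
def Extends {m : ℕ} (γ : FinPath k N A m) (lam : FB k N A) : Prop :=
  IsSubPath γ lam.2

/-- The spectral radius of a matrix of nonnegative integers, as a real number. -/
noncomputable def specRad {N : ℕ} (M : Matrix (Fin N) (Fin N) ℕ) : ℝ :=
  (spectralRadius ℂ (M.map (Nat.cast : ℕ → ℂ))).toReal

/-- The weight `w_δ` on the stationary `k`-Bratteli diagram of `A`, relative to data
`ρ : Fin k → ℝ` (the spectral radii) and `xv : Fin N → ℝ` (the Perron–Frobenius
eigenvector): on a path `η` of length `q·k + t` (`0 ≤ t ≤ k-1`) it is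
`(ρ₁^{q+1} ⋯ ρ_t^{q+1} · ρ_{t+1}^q ⋯ ρ_k^q)^{-1/δ} · xv (s η)`. -/
noncomputable def wt (δ : ℝ) (ρ : Fin k → ℝ) (xv : Fin N → ℝ) (lam : FB k N A) : ℝ :=
  (∏ i : Fin k, ρ i ^ (if (i : ℕ) < lam.1 % k then lam.1 / k + 1 else lam.1 / k))
      ^ (-(1 / δ)) * xv lam.2.src

/-- The value `M([λ]) = (ρ₁⋯ρ_t)^{-(q+1)} (ρ_{t+1}⋯ρ_k)^{-q} · x_{s(λ)}` of the
measure `M` on the cylinder set of a path of length `q·k + t`. -/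
noncomputable def Mval (ρ : Fin k → ℝ) (xv : Fin N → ℝ) (lam : FB k N A) : ℝ :=
  (∏ i : Fin k, ρ i ^ (if (i : ℕ) < lam.1 % k then lam.1 / k + 1 else lam.1 / k))⁻¹
    * xv lam.2.src

/-- A family of matrices is irreducible if for every pair of indices some finite product
of matrices from the family has positive corresponding entry. -/
def IrreducibleFamily {k N : ℕ} (A : Fin k → Matrix (Fin N) (Fin N) ℕ) : Prop :=
  ∀ a b : Fin N, ∃ l : List (Fin k), 0 < (l.map A).prod a b

/-- A single square matrix with nonnegative integer entries is irreducible if for every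
pair of indices some positive power has positive corresponding entry. -/
def MatIrreducible {N : ℕ} (B : Matrix (Fin N) (Fin N) ℕ) : Prop :=
  ∀ a b : Fin N, ∃ m : ℕ, 0 < m ∧ 0 < (B ^ m) a b

/-- The diameter (in `ℝ≥0∞`) of a set of infinite paths relative to `d_w`. -/
noncomputable def diamW (w : FB k N A → ℝ) (U : Set (PathSpace k N A)) : ℝ≥0∞ :=
  ⨆ (x) (_ : x ∈ U) (y) (_ : y ∈ U), ENNReal.ofReal (distW w x y)

/-- The `t`-dimensional Hausdorff (outer) measure of a set `Z` relative to the metric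
`d_w`: `H^t(Z) = lim_{ε → 0} inf { Σᵢ (diam Uᵢ)^t : Z ⊆ ⋃ᵢ Uᵢ, diam Uᵢ < ε }`. -/
noncomputable def hausW (w : FB k N A → ℝ) (t : ℝ) (Z : Set (PathSpace k N A)) : ℝ≥0∞ :=
  ⨆ (ε : ℝ≥0∞) (_ : 0 < ε),
    ⨅ (U : ℕ → Set (PathSpace k N A)) (_ : Z ⊆ ⋃ n, U n)
      (_ : ∀ n, diamW w (U n) < ε), ∑' n, diamW w (U n) ^ t

lemma natCast_mul_add (n i : ℕ) : ((n * k + i : ℕ) : Fin k) = (i : Fin k) := by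
  push_cast
  simp [Fin.natCast_self]

/-- Transport of edges between levels governed by the same matrix (the diagram is
stationary with period `k`). -/
def Edge.cast {i j : ℕ} (h : (i : Fin k) = (j : Fin k)) (e : Edge k N A i) :
    Edge k N A j where
  rg := e.rg
  src := e.src
  idx := Fin.cast (by rw [h]) e.idx

/-- The cylinder set `[γ e]` of a finite path `γ` (of length `m`) extended by one
further edge `e` at level `m`. -/
def cylExt {m : ℕ} (γ : FinPath k N A m) (e : Edge k N A m) : Set (PathSpace k N A) :=
  Cyl γ ∩ { x | x.1 m = e }

lemma measurableSet_cylExt {m : ℕ} (γ : FinPath k N A m) (e : Edge k N A m) :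
    MeasurableSet (cylExt γ e) :=
  (measurableSet_cyl γ).inter (measurableSet_coord m fun f => f = e)

/-- The cylinder set `[λ μ]` of the concatenation of `λ ∈ F^{nk}B` with `μ ∈ F^{k}B`
(the diagram being stationary of period `k`, `μ` concatenates onto `λ`). -/
def cylCat {n : ℕ} (lam : FinPath k N A (n * k)) (η : FinPath k N A k) :
    Set (PathSpace k N A) :=
  Cyl lam ∩ { x | (x.1 (n * k)).rg = η.rg } ∩
    ⋂ i : Fin k,
      { x | x.1 (n * k + (i : ℕ)) = Edge.cast (natCast_mul_add n (i : ℕ)).symm (η.edge i) }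

lemma measurableSet_cylCat {n : ℕ} (lam : FinPath k N A (n * k)) (η : FinPath k N A k) :
    MeasurableSet (cylCat lam η) :=
  ((measurableSet_cyl lam).inter
      (measurableSet_coord (n * k) (fun e => e.rg = η.rg))).inter
    (MeasurableSet.iInter fun i => measurableSet_coord (n * k + (i : ℕ))
      (fun e => e = Edge.cast (natCast_mul_add n (i : ℕ)).symm (η.edge i)))



end KBratteli

namespace KBratteli

section Aux
variable {k N : ℕ} [NeZero k] {A : Fin k → Matrix (Fin N) (Fin N) ℕ}

noncomputable instance (n : ℕ) : Fintype (Edge k N A n) := Fintype.ofFinite _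
noncomputable instance (ℓ : ℕ) : Fintype (FinPath k N A ℓ) := Fintype.ofFinite _

lemma FinPath.ext' {ℓ : ℕ} {p q : FinPath k N A ℓ} (hv : p.vtx = q.vtx)
    (he : p.edge = q.edge) : p = q := by
  cases p; cases q; cases hv; cases he; rfl

lemma Edge.ext' {n : ℕ} {e f : Edge k N A n} (h1 : e.rg = f.rg) (h2 : e.src = f.src)
    (h3 : (e.idx : ℕ) = (f.idx : ℕ)) : e = f := by
  obtain ⟨r, s, i⟩ := e; obtain ⟨r', s', i'⟩ := f
  cases h1; cases h2
  cases (Fin.ext h3 : i = i'); rfl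

def pathZeroEquiv : FinPath k N A 0 ≃ Fin N where
  toFun μ := μ.vtx 0
  invFun := vertexPath
  left_inv μ := FinPath.ext'
    (funext fun i => by rw [show i = 0 from Fin.ext (Nat.lt_one_iff.mp i.isLt)]; rfl)
    (funext fun i => i.elim0)
  right_inv v := rfl

def FinPath.trunc {ℓ : ℕ} (μ : FinPath k N A (ℓ + 1)) : FinPath k N A ℓ where
  vtx i := μ.vtx i.castSucc
  edge i := μ.edge i.castSucc
  rg_eq i := μ.rg_eq i.castSucc
  src_eq i := by have := μ.src_eq i.castSucc; rwa [Fin.succ_castSucc] at this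

lemma FinPath.trunc_src {ℓ : ℕ} (μ : FinPath k N A (ℓ + 1)) :
    μ.trunc.src = (μ.edge (Fin.last ℓ)).rg := (μ.rg_eq (Fin.last ℓ)).symm

lemma sigmaExt {ℓ : ℕ} {p q : Σ lam : FinPath k N A ℓ, Σ b : Fin N,
    Fin (A ((ℓ : ℕ) : Fin k) lam.src b)}
    (h1 : p.1 = q.1) (h2 : p.2.1 = q.2.1) (h3 : (p.2.2 : ℕ) = (q.2.2 : ℕ)) : p = q := by
  obtain ⟨l, b, i⟩ := p; obtain ⟨l', b', i'⟩ := q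
  cases h1; cases h2
  cases (Fin.ext h3 : i = i'); rfl

def extendEquiv (ℓ : ℕ) :
    FinPath k N A (ℓ + 1) ≃ Σ lam : FinPath k N A ℓ, Σ b : Fin N,
      Fin (A ((ℓ : ℕ) : Fin k) lam.src b) where
  toFun μ := ⟨μ.trunc, (μ.edge (Fin.last ℓ)).src,
    Fin.cast (by rw [FinPath.trunc_src]; rfl) (μ.edge (Fin.last ℓ)).idx⟩
  invFun p :=
    { vtx := Fin.snoc p.1.vtx p.2.1
      edge := Fin.snoc (α := fun i : Fin (ℓ + 1) => Edge k N A i)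
        p.1.edge ⟨p.1.src, p.2.1, p.2.2⟩
      rg_eq := fun i => by
        refine Fin.lastCases ?_ (fun j => ?_) i
        · simp [Fin.snoc_last, Fin.snoc_castSucc, FinPath.src]
        · simp [Fin.snoc_castSucc, p.1.rg_eq]
      src_eq := fun i => by
        refine Fin.lastCases ?_ (fun j => ?_) i
        · simp [Fin.snoc_last, Fin.succ_last]
        · simp [-Fin.castSucc_succ, Fin.succ_castSucc, Fin.snoc_castSucc, p.1.src_eq] }
  left_inv μ := by
    refine FinPath.ext' (funext fun i => ?_) (funext fun i => ?_)
    · refine Fin.lastCases ?_ (fun j => ?_) i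
      · dsimp only
        rw [Fin.snoc_last, μ.src_eq, Fin.succ_last]
      · simp [Fin.snoc_castSucc, FinPath.trunc]
    · refine Fin.lastCases ?_ (fun j => ?_) i
      · dsimp only
        rw [Fin.snoc_last]
        exact Edge.ext' (μ.trunc_src) rfl (by simp)
      · simp [Fin.snoc_castSucc, FinPath.trunc]
  right_inv := by
    rintro ⟨lam, b, j⟩
    apply sigmaExt
    · exact FinPath.ext' (funext fun i => by simp [FinPath.trunc, Fin.snoc_castSucc])
        (funext fun i => by simp [FinPath.trunc, Fin.snoc_castSucc])
    · simp [Fin.snoc_last]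
    · dsimp only
      rw [Fin.coe_cast]
      exact congrArg (fun e : Edge k N A ℓ => (e.idx : ℕ))
        (Fin.snoc_last (α := fun i : Fin (ℓ + 1) => Edge k N A i)
          ⟨lam.src, b, j⟩ lam.edge)


lemma sum_src_zero (f : Fin N → ℝ) :
    ∑ μ : FinPath k N A 0, f μ.src = ∑ v, f v :=
  Fintype.sum_equiv pathZeroEquiv _ _ (fun μ => rfl)

lemma sum_src_succ (ℓ : ℕ) (f : Fin N → ℝ) :
    ∑ μ : FinPath k N A (ℓ + 1), f μ.src
      = ∑ lam : FinPath k N A ℓ, ∑ b, (A ((ℓ : ℕ) : Fin k) lam.src b : ℝ) * f b := by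
  rw [Fintype.sum_equiv (extendEquiv ℓ) _
      (fun p : Σ lam : FinPath k N A ℓ, Σ b : Fin N, Fin (A ((ℓ : ℕ) : Fin k) lam.src b)
        => f p.2.1) (fun μ => by
      show f μ.src = f (μ.edge (Fin.last ℓ)).src
      rw [μ.src_eq (Fin.last ℓ), Fin.succ_last]; rfl)]
  rw [← Finset.univ_sigma_univ, Finset.sum_sigma]
  refine Finset.sum_congr rfl fun lam _ => ?_
  rw [← Finset.univ_sigma_univ, Finset.sum_sigma]
  refine Finset.sum_congr rfl fun b _ => ?_
  simp [Finset.sum_const, mul_comm]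

end Aux

section Exponent
variable {k : ℕ} [NeZero k]

lemma prod_exponents (ρ : Fin k → ℝ) (ℓ : ℕ) :
    (∏ i : Fin k, ρ i ^ (if (i : ℕ) < ℓ % k then ℓ / k + 1 else ℓ / k))
      = ∏ j ∈ Finset.range ℓ, ρ ((j : ℕ) : Fin k) := by
  induction ℓ with
  | zero => simp
  | succ ℓ ih =>
    rw [Finset.prod_range_succ, ← ih]
    have hk : 0 < k := Nat.pos_of_ne_zero (NeZero.ne k)
    have hmod : ℓ % k < k := Nat.mod_lt _ hk
    have key : ∀ i : Fin k, (if (i : ℕ) < (ℓ + 1) % k then (ℓ + 1) / k + 1 else (ℓ + 1) / k)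
        = (if (i : ℕ) < ℓ % k then ℓ / k + 1 else ℓ / k)
          + (if i = ((ℓ : ℕ) : Fin k) then 1 else 0) := by
      intro i
      have hik : (i : ℕ) < k := i.isLt
      have hiv : (i = ((ℓ : ℕ) : Fin k)) ↔ ((i : ℕ) = ℓ % k) := by
        rw [Fin.ext_iff, Fin.val_natCast]
      simp only [hiv]
      rcases Nat.lt_or_ge (ℓ % k + 1) k with h | h
      · have hl : ℓ + 1 = (ℓ % k + 1) + k * (ℓ / k) := by
          conv_lhs => rw [← Nat.div_add_mod ℓ k]
          ring
        have h1 : (ℓ + 1) % k = ℓ % k + 1 := by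
          rw [hl, Nat.add_mul_mod_self_left, Nat.mod_eq_of_lt h]
        have h2 : (ℓ + 1) / k = ℓ / k := by
          rw [hl, Nat.add_mul_div_left _ _ hk, Nat.div_eq_of_lt h, Nat.zero_add]
        rw [h1, h2]
        split_ifs <;> omega
      · have hrk : ℓ % k + 1 = k := le_antisymm hmod h
        have hl : ℓ + 1 = k * (ℓ / k + 1) := by
          conv_lhs => rw [← Nat.div_add_mod ℓ k]
          rw [Nat.mul_add, Nat.mul_one, Nat.add_assoc, hrk]
        have h1 : (ℓ + 1) % k = 0 := by rw [hl]; exact Nat.mul_mod_right k _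
        have h2 : (ℓ + 1) / k = ℓ / k + 1 := by
          rw [hl]; exact Nat.mul_div_cancel_left _ hk
        rw [h1, h2]
        split_ifs <;> omega
    calc (∏ i : Fin k, ρ i ^ (if (i : ℕ) < (ℓ + 1) % k then (ℓ + 1) / k + 1 else (ℓ + 1) / k))
        = ∏ i : Fin k, (ρ i ^ (if (i : ℕ) < ℓ % k then ℓ / k + 1 else ℓ / k)
            * ρ i ^ (if i = ((ℓ : ℕ) : Fin k) then 1 else 0)) := by
          refine Finset.prod_congr rfl fun i _ => ?_
          rw [key i, pow_add]
      _ = (∏ i : Fin k, ρ i ^ (if (i : ℕ) < ℓ % k then ℓ / k + 1 else ℓ / k))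
            * ∏ i : Fin k, (if i = ((ℓ : ℕ) : Fin k) then ρ i else 1) := by
          rw [Finset.prod_mul_distrib]
          congr 1
          exact Finset.prod_congr rfl fun i _ => by split_ifs <;> simp
      _ = (∏ i : Fin k, ρ i ^ (if (i : ℕ) < ℓ % k then ℓ / k + 1 else ℓ / k))
            * ρ ((ℓ : ℕ) : Fin k) := by
          rw [Finset.prod_ite_eq' Finset.univ _ ρ]
          simp

end Exponent

/-- For an irreducible family of pairwise commuting matrices with all
row sums at least 2, and the weight `w_δ` (built from the spectral radii and the
unimodular Perron–Frobenius eigenvector), the ζ-function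
`ζ_δ(s) = Σ_{λ ∈ FB} w_δ(λ)^s` converges exactly for real `s > δ`. -/
theorem statement6 (k N : ℕ) [NeZero k] [NeZero N]
    (A : Fin k → Matrix (Fin N) (Fin N) ℕ)
    (hcomm : ∀ i j, A i * A j = A j * A i)
    (hirr : IrreducibleFamily A)
    (hrow : ∀ (i : Fin k) (a : Fin N), 2 ≤ ∑ b, A i a b)
    (ρ : Fin k → ℝ) (hρ : ∀ i, ρ i = specRad (A i))
    (x : Fin N → ℝ) (hxpos : ∀ v, 0 < x v) (hxsum : ∑ v, x v = 1)
    (hxeig : ∀ i, ((A i).map (Nat.cast : ℕ → ℝ)).mulVec x = ρ i • x)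
    (δ : ℝ) (hδ : δ ∈ Set.Ioo (0 : ℝ) 1) :
    ∀ s : ℝ, Summable (fun lam : FB k N A => wt δ ρ x lam ^ s) ↔ δ < s := by
  intro s
  obtain ⟨hδ0, hδ1⟩ := hδ
  have hN : 0 < N := Nat.pos_of_ne_zero (NeZero.ne N)
  have hNe : Nonempty (Fin N) := ⟨⟨0, hN⟩⟩
  have hune : (Finset.univ : Finset (Fin N)).Nonempty := Finset.univ_nonempty
  have heig : ∀ (i : Fin k) (v : Fin N),
      ∑ b, (A i v b : ℝ) * x b = ρ i * x v := by
    intro i v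
    have h := congrFun (hxeig i) v
    simpa [Matrix.mulVec, dotProduct, Matrix.map_apply] using h
  -- positivity of the spectral radii
  have hρpos : ∀ i, 0 < ρ i := by
    intro i
    obtain ⟨v⟩ := hNe
    have h2 := hrow i v
    have hex : ∃ b, 0 < A i v b := by
      by_contra hno
      push_neg at hno
      have : ∑ b, A i v b = 0 := Finset.sum_eq_zero fun b _ => Nat.le_zero.mp (hno b)
      omega
    obtain ⟨b, hb⟩ := hex
    have hpos : 0 < ∑ b, (A i v b : ℝ) * x b := by
      refine Finset.sum_pos' (fun c _ => mul_nonneg (Nat.cast_nonneg _) (hxpos c).le)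
        ⟨b, Finset.mem_univ b, ?_⟩
      exact mul_pos (by exact_mod_cast hb) (hxpos b)
    rw [heig i v] at hpos
    by_contra hle
    push_neg at hle
    exact absurd hpos (not_lt.mpr (mul_nonpos_of_nonpos_of_nonneg hle (hxpos v).le))
  set P : ℕ → ℝ := fun ℓ => ∏ j ∈ Finset.range ℓ, ρ ((j : ℕ) : Fin k) with hPdef
  have hPpos : ∀ ℓ, 0 < P ℓ := fun ℓ => Finset.prod_pos fun j _ => hρpos _
  have hPsum : ∀ ℓ, ∑ μ : FinPath k N A ℓ, x μ.src = P ℓ := by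
    intro ℓ; induction ℓ with
    | zero => simpa [hPdef, sum_src_zero] using hxsum
    | succ ℓ ih =>
      rw [sum_src_succ ℓ x]
      calc ∑ lam : FinPath k N A ℓ, ∑ b, (A ((ℓ : ℕ) : Fin k) lam.src b : ℝ) * x b
          = ∑ lam : FinPath k N A ℓ, ρ ((ℓ : ℕ) : Fin k) * x lam.src :=
            Finset.sum_congr rfl fun lam _ => heig _ _
        _ = ρ ((ℓ : ℕ) : Fin k) * ∑ lam : FinPath k N A ℓ, x lam.src := by
            rw [Finset.mul_sum]
        _ = P (ℓ + 1) := by rw [ih, hPdef]; dsimp only; rw [Finset.prod_range_succ]; ring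
  have hcount : ∀ ℓ, (2 : ℝ) ^ ℓ ≤ ∑ μ : FinPath k N A ℓ, (1 : ℝ) := by
    intro ℓ; induction ℓ with
    | zero =>
      rw [sum_src_zero (fun _ => (1 : ℝ))]
      simp only [Finset.sum_const, Finset.card_univ, Fintype.card_fin, nsmul_eq_mul, mul_one,
        pow_zero]
      exact_mod_cast hN
    | succ ℓ ih =>
      have hrow' : ∀ lam : FinPath k N A ℓ,
          (2 : ℝ) ≤ ∑ b, (A ((ℓ : ℕ) : Fin k) lam.src b : ℝ) * 1 := by
        intro lam
        have := hrow ((ℓ : ℕ) : Fin k) lam.src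
        simp only [mul_one]
        exact_mod_cast this
      calc (2 : ℝ) ^ (ℓ + 1) = 2 * 2 ^ ℓ := by ring
        _ ≤ 2 * ∑ μ : FinPath k N A ℓ, (1 : ℝ) := by
            exact mul_le_mul_of_nonneg_left ih (by norm_num)
        _ = ∑ lam : FinPath k N A ℓ, (2 : ℝ) := by rw [Finset.mul_sum]; simp
        _ ≤ ∑ lam : FinPath k N A ℓ, ∑ b, (A ((ℓ : ℕ) : Fin k) lam.src b : ℝ) * 1 :=
            Finset.sum_le_sum fun lam _ => hrow' lam
        _ = ∑ μ : FinPath k N A (ℓ + 1), (1 : ℝ) := (sum_src_succ ℓ fun _ => (1 : ℝ)).symm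
  set m : ℝ := Finset.univ.inf' hune x with hm
  have hmpos : 0 < m := by rw [hm]; exact (Finset.lt_inf'_iff hune).mpr fun v _ => hxpos v
  have hmle : ∀ v, m ≤ x v := fun v => Finset.inf'_le _ (Finset.mem_univ v)
  have hPlow : ∀ ℓ, m * 2 ^ ℓ ≤ P ℓ := by
    intro ℓ
    calc m * 2 ^ ℓ ≤ m * ∑ μ : FinPath k N A ℓ, (1 : ℝ) :=
          mul_le_mul_of_nonneg_left (hcount ℓ) hmpos.le
      _ = ∑ μ : FinPath k N A ℓ, m := by rw [Finset.mul_sum]; simp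
      _ ≤ ∑ μ : FinPath k N A ℓ, x μ.src := Finset.sum_le_sum fun μ _ => hmle _
      _ = P ℓ := hPsum ℓ
  have hwt : ∀ p : FB k N A, wt δ ρ x p = P p.1 ^ (-(1 / δ)) * x p.2.src := by
    intro p
    simp only [wt]
    rw [prod_exponents]
  have hwtpos : ∀ p : FB k N A, 0 < wt δ ρ x p := fun p => by
    rw [hwt]; exact mul_pos (Real.rpow_pos_of_pos (hPpos _) _) (hxpos _)
  set a : ℝ := -(1 / δ) * s with ha
  set c1 : ℝ := Finset.univ.inf' hune (fun v => x v ^ s / x v) with hc1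
  set c2 : ℝ := Finset.univ.sup' hune (fun v => x v ^ s / x v) with hc2
  have hc1pos : 0 < c1 := by
    rw [hc1]
    exact (Finset.lt_inf'_iff hune).mpr fun v _ =>
      div_pos (Real.rpow_pos_of_pos (hxpos v) s) (hxpos v)
  have hc2pos : 0 < c2 := by
    obtain ⟨v⟩ := hNe
    rw [hc2]
    exact lt_of_lt_of_le (div_pos (Real.rpow_pos_of_pos (hxpos v) s) (hxpos v))
      (Finset.le_sup' (fun v => x v ^ s / x v) (Finset.mem_univ v))
  have hxs1 : ∀ v, c1 * x v ≤ x v ^ s := fun v =>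
    (le_div_iff₀ (hxpos v)).mp (Finset.inf'_le _ (Finset.mem_univ v))
  have hxs2 : ∀ v, x v ^ s ≤ c2 * x v := fun v =>
    (div_le_iff₀ (hxpos v)).mp (by rw [hc2]; exact Finset.le_sup' (fun v => x v ^ s / x v) (Finset.mem_univ v))
  set G : ℕ → ℝ := fun ℓ => ∑ μ : FinPath k N A ℓ, wt δ ρ x ⟨ℓ, μ⟩ ^ s with hGdef
  have hGval : ∀ ℓ, G ℓ = P ℓ ^ a * ∑ μ : FinPath k N A ℓ, x μ.src ^ s := by
    intro ℓ
    rw [hGdef]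
    dsimp only
    rw [Finset.mul_sum]
    refine Finset.sum_congr rfl fun μ _ => ?_
    rw [hwt ⟨ℓ, μ⟩, Real.mul_rpow (Real.rpow_nonneg (hPpos ℓ).le _) (hxpos _).le,
      ← Real.rpow_mul (hPpos ℓ).le]
  have hGlb : ∀ ℓ, c1 * P ℓ ^ (a + 1) ≤ G ℓ := by
    intro ℓ
    have hs1 : c1 * P ℓ ≤ ∑ μ : FinPath k N A ℓ, x μ.src ^ s := by
      rw [← hPsum ℓ, Finset.mul_sum]
      exact Finset.sum_le_sum fun μ _ => hxs1 _
    calc c1 * P ℓ ^ (a + 1) = P ℓ ^ a * (c1 * P ℓ) := by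
          rw [Real.rpow_add (hPpos ℓ), Real.rpow_one]; ring
      _ ≤ P ℓ ^ a * ∑ μ : FinPath k N A ℓ, x μ.src ^ s :=
          mul_le_mul_of_nonneg_left hs1 (Real.rpow_nonneg (hPpos ℓ).le a)
      _ = G ℓ := (hGval ℓ).symm
  have hGub : ∀ ℓ, G ℓ ≤ c2 * P ℓ ^ (a + 1) := by
    intro ℓ
    have hs2 : ∑ μ : FinPath k N A ℓ, x μ.src ^ s ≤ c2 * P ℓ := by
      rw [← hPsum ℓ, Finset.mul_sum]
      exact Finset.sum_le_sum fun μ _ => hxs2 _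
    calc G ℓ = P ℓ ^ a * ∑ μ : FinPath k N A ℓ, x μ.src ^ s := hGval ℓ
      _ ≤ P ℓ ^ a * (c2 * P ℓ) :=
          mul_le_mul_of_nonneg_left hs2 (Real.rpow_nonneg (hPpos ℓ).le a)
      _ = c2 * P ℓ ^ (a + 1) := by rw [Real.rpow_add (hPpos ℓ), Real.rpow_one]; ring
  have hGnn : ∀ ℓ, 0 ≤ G ℓ :=
    fun ℓ => Finset.sum_nonneg fun μ _ => Real.rpow_nonneg (hwtpos _).le _
  have hnn : ∀ p : FB k N A, 0 ≤ wt δ ρ x p ^ s := fun p => Real.rpow_nonneg (hwtpos p).le s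
  have htsum : ∀ ℓ, (∑' μ : FinPath k N A ℓ, wt δ ρ x ⟨ℓ, μ⟩ ^ s) = G ℓ :=
    fun ℓ => tsum_fintype _
  have hfib : ∀ ℓ, Summable fun μ : FinPath k N A ℓ => wt δ ρ x ⟨ℓ, μ⟩ ^ s :=
    fun ℓ => Summable.of_finite
  rw [summable_sigma_of_nonneg hnn]
  constructor
  · rintro ⟨-, hsum⟩
    by_contra hs
    push_neg at hs
    have ha1 : 0 ≤ a + 1 := by
      have h1 : s / δ ≤ 1 := (div_le_one hδ0).mpr hs
      have h2 : a = -(s / δ) := by rw [ha]; ring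
      linarith
    obtain ⟨L, hL⟩ := pow_unbounded_of_one_lt (1 / m) (one_lt_two (α := ℝ))
    have hPge1 : ∀ ℓ, L ≤ ℓ → (1 : ℝ) ≤ P ℓ := by
      intro ℓ hℓ
      have h2 : (2 : ℝ) ^ L ≤ 2 ^ ℓ := pow_le_pow_right₀ one_le_two hℓ
      have h3 := hPlow ℓ
      have h4 : (1 : ℝ) < m * 2 ^ L := by
        rw [div_lt_iff₀ hmpos] at hL
        nlinarith
      nlinarith
    have hGc1 : ∀ ℓ, L ≤ ℓ → c1 ≤ G ℓ := by
      intro ℓ hℓ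
      have h1 : (1 : ℝ) ≤ P ℓ ^ (a + 1) := Real.one_le_rpow (hPge1 ℓ hℓ) ha1
      calc c1 = c1 * 1 := by ring
        _ ≤ c1 * P ℓ ^ (a + 1) := mul_le_mul_of_nonneg_left h1 hc1pos.le
        _ ≤ G ℓ := hGlb ℓ
    have hsum' : Summable G := by rwa [funext htsum] at hsum
    have hev : ∀ᶠ ℓ in atTop, G ℓ < c1 :=
      hsum'.tendsto_atTop_zero.eventually_lt_const hc1pos
    obtain ⟨ℓ, hℓ1, hℓ2⟩ := (hev.and (eventually_ge_atTop L)).exists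
    exact absurd (hGc1 ℓ hℓ2) (not_le.mpr hℓ1)
  · intro hs
    refine ⟨hfib, ?_⟩
    have he : a + 1 < 0 := by
      have h1 : (1 : ℝ) < s / δ := (one_lt_div hδ0).mpr hs
      have h2 : a = -(s / δ) := by rw [ha]; ring
      linarith
    set r : ℝ := (2 : ℝ) ^ (a + 1) with hr
    have hr0 : 0 ≤ r := (Real.rpow_pos_of_pos two_pos _).le
    have hr1 : r < 1 := Real.rpow_lt_one_of_one_lt_of_neg one_lt_two he
    have hbound : ∀ ℓ, G ℓ ≤ (c2 * m ^ (a + 1)) * r ^ ℓ := by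
      intro ℓ
      have h1 : P ℓ ^ (a + 1) ≤ (m * 2 ^ ℓ) ^ (a + 1) :=
        Real.rpow_le_rpow_of_nonpos (by positivity) (hPlow ℓ) he.le
      have h2 : (m * 2 ^ ℓ) ^ (a + 1) = m ^ (a + 1) * r ^ ℓ := by
        rw [Real.mul_rpow hmpos.le (by positivity)]
        congr 1
        rw [← Real.rpow_natCast (2 : ℝ) ℓ, ← Real.rpow_mul (by norm_num), mul_comm,
          Real.rpow_mul (by norm_num), Real.rpow_natCast]
      calc G ℓ ≤ c2 * P ℓ ^ (a + 1) := hGub ℓ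
        _ ≤ c2 * ((m * 2 ^ ℓ) ^ (a + 1)) := mul_le_mul_of_nonneg_left h1 hc2pos.le
        _ = (c2 * m ^ (a + 1)) * r ^ ℓ := by rw [h2]; ring
    have hgeo : Summable (fun ℓ : ℕ => (c2 * m ^ (a + 1)) * r ^ ℓ) :=
      (summable_geometric_of_lt_one hr0 hr1).mul_left _
    have hsG : Summable G := hgeo.of_nonneg_of_le hGnn hbound
    rwa [funext htsum]


end KBratteli
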